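/- Let F be a convex subset of a Hausdorff locally convex topological vector space X with 0 ∈ int(F), and let Ω be a proper subset of X (Ω and its complement nonempty). Define μ_Ω^F(x) := +∞ for x ∉ Ω and μ_Ω^F(x) := −T_{Ωᶜ}^F(x) for x ∈ Ω. Then μ_Ω^F is convex if and only if Ω is convex. -/

import Mathlib

open Set Filter Topology Pointwise

variable {X : Type*} [AddCommGroup X] [Module ℝ X] [TopologicalSpace X]
  [IsTopologicalAddGroup X] [ContinuousSMul ℝ X] [T2Space X] [LocallyConvexSpace ℝ X]

/-- The set of admissible times in the definition of the minimal time function. -/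
def timeSet (F Ω : Set X) (x : X) : Set ℝ := {t : ℝ | 0 < t ∧ ∃ f ∈ F, x + t • f ∈ Ω}

/-- The minimal time function with target Ω and constant dynamics F. -/
noncomputable def minTime (F Ω : Set X) (x : X) : ℝ := sInf (timeSet F Ω x)

open Classical in
/-- The extended-real-valued function μ_Ω^F: equal to −T_{Ωᶜ}^F on Ω and +∞ outside Ω. -/
noncomputable def muFn (F Ω : Set X) (x : X) : EReal :=
  if x ∈ Ω then (↑(-(minTime F Ωᶜ x)) : EReal) else ⊤

lemma muFn_of_mem {Ω : Set X} (F : Set X) {x : X} (hx : x ∈ Ω) :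
    muFn F Ω x = (↑(-(minTime F Ωᶜ x)) : EReal) := by simp [muFn, hx]

lemma muFn_of_not_mem {Ω : Set X} (F : Set X) {x : X} (hx : x ∉ Ω) :
    muFn F Ω x = ⊤ := by simp [muFn, hx]

lemma timeSet_nonempty (F Ω : Set X) (h0 : (0 : X) ∈ interior F) (hne : Ω.Nonempty) (x : X) :
    (timeSet F Ω x).Nonempty := by
  obtain ⟨ω, hω⟩ := hne
  have hF : F ∈ 𝓝 (0 : X) := mem_interior_iff_mem_nhds.mp h0
  have h1 : Tendsto (fun t : ℝ => t⁻¹ • (ω - x)) atTop (𝓝 (0 : X)) := by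
    have h := Tendsto.smul_const (M := ℝ) (f := fun t : ℝ => t⁻¹) tendsto_inv_atTop_zero (ω - x)
    simpa using h
  have h2 : ∀ᶠ t : ℝ in atTop, t⁻¹ • (ω - x) ∈ F := h1.eventually_mem hF
  obtain ⟨t, ht1, htF⟩ := ((eventually_gt_atTop (0 : ℝ)).and h2).exists
  exact ⟨t, ht1, t⁻¹ • (ω - x), htF, by
    rw [smul_inv_smul₀ ht1.ne']
    simpa using hω⟩

lemma minTime_nonneg (F Ω : Set X) (x : X) : 0 ≤ minTime F Ω x :=
  Real.sInf_nonneg (fun s hs => hs.1.le)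

lemma timeSet_bddBelow (F Ω : Set X) (x : X) : BddBelow (timeSet F Ω x) :=
  ⟨0, fun s hs => hs.1.le⟩

lemma minTime_concave (F Ω : Set X) (h0 : (0 : X) ∈ interior F)
    (hΩcne : Ωᶜ.Nonempty) (hΩ : Convex ℝ Ω) {x y : X} (hx : x ∈ Ω) (hy : y ∈ Ω)
    {a b : ℝ} (ha : 0 < a) (hb : 0 < b) (hab : a + b = 1) :
    a * minTime F Ωᶜ x + b * minTime F Ωᶜ y ≤ minTime F Ωᶜ (a • x + b • y) := by
  apply le_csInf (timeSet_nonempty F Ωᶜ h0 hΩcne _)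
  rintro t ⟨ht, f, hf, hzf⟩
  by_contra hlt
  push_neg at hlt
  set Tx := minTime F Ωᶜ x with hTxdef
  set Ty := minTime F Ωᶜ y with hTydef
  have hTx : 0 ≤ Tx := minTime_nonneg F Ωᶜ x
  have hTy : 0 ≤ Ty := minTime_nonneg F Ωᶜ y
  have hD : 0 < a * Tx + b * Ty := ht.trans hlt
  have mem_of_lt : ∀ w ∈ Ω, ∀ s : ℝ, (s = 0 ∨ (0 < s ∧ s < minTime F Ωᶜ w)) →
      w + s • f ∈ Ω := by
    rintro w hw s (rfl | ⟨hs0, hs⟩)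
    · simpa using hw
    · by_contra hns
      have hmem : s ∈ timeSet F Ωᶜ w := ⟨hs0, f, hf, hns⟩
      exact absurd (csInf_le (timeSet_bddBelow F Ωᶜ w) hmem) (not_le.mpr hs)
  set s := t * Tx / (a * Tx + b * Ty) with hsdef
  set r := t * Ty / (a * Tx + b * Ty) with hrdef
  have hxs : x + s • f ∈ Ω := by
    apply mem_of_lt x hx
    rcases hTx.eq_or_lt with h | h
    · left; rw [hsdef, ← h]; ring
    · right
      constructor
      · positivity
      · rw [hsdef, div_lt_iff₀ hD]
        nlinarith
  have hyr : y + r • f ∈ Ω := by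
    apply mem_of_lt y hy
    rcases hTy.eq_or_lt with h | h
    · left; rw [hrdef, ← h]; ring
    · right
      constructor
      · positivity
      · rw [hrdef, div_lt_iff₀ hD]
        nlinarith
  have hcomb := hΩ hxs hyr ha.le hb.le hab
  have hst : a * s + b * r = t := by
    rw [hsdef, hrdef]
    field_simp
  have heq : a • (x + s • f) + b • (y + r • f) = (a • x + b • y) + (a * s + b * r) • f := by
    module
  rw [heq, hst] at hcomb
  exact hzf hcomb

/-- The function μ_Ω^F is convex if and only if the set Ω is convex. -/
theorem muFn_convex_iff (F Ω : Set X) (hconv : Convex ℝ F) (h0 : (0 : X) ∈ interior F)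
    (hΩne : Ω.Nonempty) (hΩcne : Ωᶜ.Nonempty) :
    (∀ x y : X, ∀ a b : ℝ, 0 ≤ a → 0 ≤ b → a + b = 1 →
        muFn F Ω (a • x + b • y) ≤ (a : EReal) * muFn F Ω x + (b : EReal) * muFn F Ω y) ↔
      Convex ℝ Ω := by
  constructor
  · intro h x hx y hy a b ha hb hab
    have key := h x y a b ha hb hab
    by_contra hz
    rw [muFn_of_not_mem F hz, muFn_of_mem F hx, muFn_of_mem F hy,
      ← EReal.coe_mul, ← EReal.coe_mul, ← EReal.coe_add] at key
    exact (EReal.coe_ne_top _) (top_le_iff.mp key)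
  · intro hΩ x y a b ha hb hab
    rcases ha.eq_or_lt with heq | ha'
    · obtain rfl : a = 0 := heq.symm
      obtain rfl : b = 1 := by linarith
      simp
    rcases hb.eq_or_lt with heq | hb'
    · obtain rfl : b = 0 := heq.symm
      obtain rfl : a = 1 := by linarith
      simp
    by_cases hx : x ∈ Ω
    · by_cases hy : y ∈ Ω
      · have hz : a • x + b • y ∈ Ω := hΩ hx hy ha hb hab
        rw [muFn_of_mem F hz, muFn_of_mem F hx, muFn_of_mem F hy,
          ← EReal.coe_mul, ← EReal.coe_mul, ← EReal.coe_add, EReal.coe_le_coe_iff]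
        have := minTime_concave F Ω h0 hΩcne hΩ hx hy ha' hb' hab
        linarith
      · rw [muFn_of_not_mem F hy, EReal.coe_mul_top_of_pos hb']
        by_cases hx' : x ∈ Ω
        · rw [muFn_of_mem F hx']
          rw [← EReal.coe_mul, EReal.coe_add_top]
          exact le_top
        · rw [muFn_of_not_mem F hx', EReal.coe_mul_top_of_pos ha']
          simp
    · rw [muFn_of_not_mem F hx, EReal.coe_mul_top_of_pos ha']
      by_cases hy' : y ∈ Ω
      · rw [muFn_of_mem F hy']
        rw [← EReal.coe_mul, EReal.top_add_coe]
        exact le_top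
      · rw [muFn_of_not_mem F hy', EReal.coe_mul_top_of_pos hb']
        simp
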